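/- Let d ≥ 0 and let f, g, h ∈ Bₙ be polynomials with f ⊲ g and f ⊲ h, and suppose every nonzero member of the pencil spanned by f and g, and every nonzero member of the pencil spanned by f and h, has root separation strictly greater than d. Then g + h ∈ Bₙ, f ⊲ (g + h), and every nonzero member of the pencil spanned by f and g + h has root separation strictly greater than d. -/

import Mathlib

open Polynomial

/-- A real polynomial all of whose roots are real and simple. -/
def SimpleRealRoots (p : Polynomial ℝ) : Prop :=
  p ≠ 0 ∧ p.roots.card = p.natDegree ∧ p.roots.Nodup

/-- Membership in `Bₙ`: degree `n` or `n - 1` with all roots real and simple. -/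
def MemB (n : ℕ) (p : Polynomial ℝ) : Prop :=
  SimpleRealRoots p ∧ (p.natDegree = n ∨ p.natDegree = n - 1)

/-- The minimal distance between distinct real roots of `p`
(`+∞` if `p` has at most one root). -/
noncomputable def rootSep (p : Polynomial ℝ) : ENNReal :=
  ⨅ (s : ℝ) (t : ℝ) (_ : p.IsRoot s) (_ : p.IsRoot t) (_ : s ≠ t), ENNReal.ofReal |s - t|

/-- `f ⊲ g`: every nonzero member of the pencil spanned by `f` and `g` lies in `Bₙ`
(equivalently the roots strictly interlace), and moreover `g` is negative at the largest
root of `f`; if `deg f = n - 1` (formal largest root `+∞`), instead the leading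
coefficient of `g` is negative. -/
def Prec (n : ℕ) (f g : Polynomial ℝ) : Prop :=
  (∀ a b : ℝ, (a, b) ≠ (0, 0) → MemB n (a • f + b • g)) ∧
  (f.natDegree = n →
    ∀ r : ℝ, f.IsRoot r → (∀ r' : ℝ, f.IsRoot r' → r' ≤ r) → g.eval r < 0) ∧
  (f.natDegree = n - 1 → g.leadingCoeff < 0)

open Filter Set Topology

/-! ### Sign helpers -/

lemma st6_possg {a b c : ℝ} (h1 : 0 < a * b) (h2 : 0 < b * c) : 0 < a * c := by
  nlinarith [mul_pos h1 h2, sq_nonneg b]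

lemma st6_negg {a b c : ℝ} (h1 : 0 < a * b) (h2 : b * c < 0) : a * c < 0 := by
  nlinarith [sq_nonneg b]

lemma st6_mixg {a b p q : ℝ} (h : 0 < (a * p) * (b * q)) (hab : a * b < 0) : p * q < 0 := by
  nlinarith [sq_nonneg (a*b), sq_nonneg (p*q)]

lemma st6_mixg2 {c p q : ℝ} (h : 0 < (c * p) * (c * q)) : 0 < p * q := by
  nlinarith [sq_nonneg c]

/-! ### IVT helpers -/

lemma st6_root_Ioo {p : Polynomial ℝ} {a b : ℝ} (hab : a < b)
    (h : p.eval a * p.eval b < 0) : ∃ z ∈ Ioo a b, p.IsRoot z := by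
  have hc : ContinuousOn (fun x => p.eval x) (Icc a b) := (p.continuous).continuousOn
  rcases mul_neg_iff.mp h with ⟨ha, hb⟩ | ⟨ha, hb⟩
  · have : (0:ℝ) ∈ Ioo (p.eval b) (p.eval a) := ⟨hb, ha⟩
    obtain ⟨z, hz, hz0⟩ := intermediate_value_Ioo' hab.le hc this
    exact ⟨z, hz, hz0⟩
  · have : (0:ℝ) ∈ Ioo (p.eval a) (p.eval b) := ⟨ha, hb⟩
    obtain ⟨z, hz, hz0⟩ := intermediate_value_Ioo hab.le hc this
    exact ⟨z, hz, hz0⟩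

lemma st6_same_sign_of_no_root {p : Polynomial ℝ} {a b : ℝ} (hab : a < b)
    (h : ∀ z ∈ Icc a b, ¬ p.IsRoot z) : 0 < p.eval a * p.eval b := by
  rcases lt_trichotomy (p.eval a * p.eval b) 0 with h' | h' | h'
  · obtain ⟨z, hz, hz0⟩ := st6_root_Ioo hab h'
    exact absurd hz0 (h z (Ioo_subset_Icc_self hz))
  · rcases mul_eq_zero.mp h' with h'' | h''
    · exact absurd h'' (h a ⟨le_refl a, hab.le⟩)
    · exact absurd h'' (h b ⟨hab.le, le_refl b⟩)
  · exact h'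

lemma st6_const_sign {p : Polynomial ℝ} (h : ∀ x, p.eval x ≠ 0) (x y : ℝ) :
    0 < p.eval x * p.eval y := by
  rcases lt_trichotomy x y with hxy | rfl | hxy
  · exact st6_same_sign_of_no_root hxy fun z _ => h z
  · exact mul_self_pos.mpr (h x)
  · have := st6_same_sign_of_no_root hxy fun z _ => h z
    linarith [this]

/-! ### Local sign from the derivative -/

lemma st6_deriv_right {p : Polynomial ℝ} {x w : ℝ} (hx : p.eval x = 0)
    (hd : (derivative p).eval x ≠ 0) (hw : x < w) :
    ∃ u ∈ Ioo x w, 0 < p.eval u * (derivative p).eval x := by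
  have H := (p.hasDerivAt x)
  rw [hasDerivAt_iff_tendsto_slope] at H
  have H2 : Tendsto (fun u => slope (fun t => p.eval t) x u * (derivative p).eval x)
      (𝓝[≠] x) (𝓝 ((derivative p).eval x * (derivative p).eval x)) := H.mul_const _
  have hpos : (0:ℝ) < (derivative p).eval x * (derivative p).eval x := mul_self_pos.mpr hd
  have hev : ∀ᶠ u in 𝓝[≠] x,
      0 < slope (fun t => p.eval t) x u * (derivative p).eval x :=
    H2.eventually (eventually_gt_nhds hpos)
  have hmono : 𝓝[>] x ≤ 𝓝[≠] x := nhdsWithin_mono x fun u hu => ne_of_gt hu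
  have hev2 : ∀ᶠ u in 𝓝[>] x,
      0 < slope (fun t => p.eval t) x u * (derivative p).eval x := hev.filter_mono hmono
  have hIoo : Ioo x w ∈ 𝓝[>] x := Ioo_mem_nhdsGT hw
  obtain ⟨u, hu1, hu2⟩ := (hev2.and (eventually_of_mem hIoo fun u hu => hu)).exists
  refine ⟨u, hu2, ?_⟩
  have hux : 0 < u - x := sub_pos.mpr hu2.1
  have hslope : slope (fun t => p.eval t) x u = p.eval u / (u - x) := by
    rw [slope_def_field]; rw [hx]; ring_nf
  rw [hslope] at hu1
  have := mul_pos hu1 hux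
  calc (0:ℝ) < p.eval u / (u - x) * (derivative p).eval x * (u - x) := this
    _ = p.eval u * (derivative p).eval x := by field_simp

lemma st6_deriv_left {p : Polynomial ℝ} {x w : ℝ} (hx : p.eval x = 0)
    (hd : (derivative p).eval x ≠ 0) (hw : w < x) :
    ∃ u ∈ Ioo w x, p.eval u * (derivative p).eval x < 0 := by
  have H := (p.hasDerivAt x)
  rw [hasDerivAt_iff_tendsto_slope] at H
  have H2 : Tendsto (fun u => slope (fun t => p.eval t) x u * (derivative p).eval x)
      (𝓝[≠] x) (𝓝 ((derivative p).eval x * (derivative p).eval x)) := H.mul_const _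
  have hpos : (0:ℝ) < (derivative p).eval x * (derivative p).eval x := mul_self_pos.mpr hd
  have hev : ∀ᶠ u in 𝓝[≠] x,
      0 < slope (fun t => p.eval t) x u * (derivative p).eval x :=
    H2.eventually (eventually_gt_nhds hpos)
  have hmono : 𝓝[<] x ≤ 𝓝[≠] x := nhdsWithin_mono x fun u hu => ne_of_lt hu
  have hev2 : ∀ᶠ u in 𝓝[<] x,
      0 < slope (fun t => p.eval t) x u * (derivative p).eval x := hev.filter_mono hmono
  have hIoo : Ioo w x ∈ 𝓝[<] x := Ioo_mem_nhdsLT hw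
  obtain ⟨u, hu1, hu2⟩ := (hev2.and (eventually_of_mem hIoo fun u hu => hu)).exists
  refine ⟨u, hu2, ?_⟩
  have hux : u - x < 0 := sub_neg.mpr hu2.2
  have hslope : slope (fun t => p.eval t) x u = p.eval u / (u - x) := by
    rw [slope_def_field]; rw [hx]; ring_nf
  rw [hslope] at hu1
  have := mul_pos hu1 (neg_pos.mpr hux)
  have hne : u - x ≠ 0 := ne_of_lt hux
  calc p.eval u * (derivative p).eval x
      = -(p.eval u / (u - x) * (derivative p).eval x * -(u - x)) := by field_simp
    _ < 0 := by linarith [this]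

/-! ### Eventual signs at infinity -/

lemma st6_ev_top {p : Polynomial ℝ} (hp : p ≠ 0) :
    ∀ᶠ x in atTop, 0 < p.eval x * p.leadingCoeff := by
  rcases le_or_gt p.degree 0 with h | h
  · have h0 : p.natDegree = 0 := natDegree_eq_zero_iff_degree_le_zero.mpr h
    obtain ⟨c, rfl⟩ := natDegree_eq_zero.mp h0
    have hc : c ≠ 0 := fun hc => hp (by rw [hc, map_zero])
    filter_upwards with x
    simp only [eval_C, leadingCoeff_C]
    exact mul_self_pos.mpr hc
  · rcases lt_trichotomy p.leadingCoeff 0 with hl | hl | hl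
    · have := p.tendsto_atBot_of_leadingCoeff_nonpos h hl.le
      filter_upwards [this.eventually_lt_atBot 0] with x hx
      exact mul_pos_of_neg_of_neg hx hl
    · exact absurd (leadingCoeff_eq_zero.mp hl) hp
    · have := p.tendsto_atTop_of_leadingCoeff_nonneg h hl.le
      filter_upwards [this.eventually_gt_atTop 0] with x hx
      exact mul_pos hx hl

lemma st6_ev_bot {p : Polynomial ℝ} (hp : p ≠ 0) :
    ∀ᶠ x in atBot, 0 < p.eval x * p.leadingCoeff * (-1) ^ p.natDegree := by
  set q := p.comp (-X : Polynomial ℝ) with hq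
  have hX : (-X : Polynomial ℝ).natDegree = 1 := by simp [natDegree_neg]
  have hqd : q.natDegree = p.natDegree := by rw [hq, natDegree_comp, hX, mul_one]
  have hql : q.leadingCoeff = p.leadingCoeff * (-1) ^ p.natDegree := by
    rw [hq, leadingCoeff_comp (by rw [hX]; exact one_ne_zero)]
    congr 1
    rw [show (-X : Polynomial ℝ).leadingCoeff = -1 by simp [leadingCoeff_neg]]
  have hq0 : q ≠ 0 := by
    intro h0
    have : q.leadingCoeff = 0 := by rw [h0]; simp
    rw [hql] at this
    rcases mul_eq_zero.mp this with h1 | h1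
    · exact hp (leadingCoeff_eq_zero.mp h1)
    · exact absurd h1 (pow_ne_zero _ (by norm_num))
  have hev := st6_ev_top hq0
  have hmap : Tendsto (fun x : ℝ => -x) atBot atTop := tendsto_neg_atBot_atTop
  filter_upwards [hmap.eventually hev] with x hx
  rw [hq, eval_comp] at hx
  simp only [eval_neg, eval_X, neg_neg] at hx
  rw [hql] at hx
  linarith [hx]

/-! ### Counting distinct roots -/

lemma st6_val_le {p : Polynomial ℝ} (hp : p ≠ 0) (F : Finset ℝ)
    (hr : ∀ r ∈ F, p.IsRoot r) : F.val ≤ p.roots := by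
  rw [Multiset.le_iff_count]
  intro a
  by_cases ha : a ∈ F
  · have h1 : F.val.count a = 1 := by
      rw [Multiset.count_eq_one_of_mem F.nodup ha]
    rw [h1, count_roots]
    exact (rootMultiplicity_pos hp).mpr (hr a ha)
  · have h1 : F.val.count a = 0 := by
      rw [Multiset.count_eq_zero]; exact ha
    rw [h1]; exact Nat.zero_le _

lemma st6_card_le {p : Polynomial ℝ} (hp : p ≠ 0) (F : Finset ℝ)
    (hr : ∀ r ∈ F, p.IsRoot r) : F.card ≤ p.natDegree :=
  le_trans (Multiset.card_le_card (st6_val_le hp F hr)) (p.card_roots')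

lemma st6_simple {p : Polynomial ℝ} (hp : p ≠ 0) (F : Finset ℝ)
    (hcard : F.card = p.natDegree) (hr : ∀ r ∈ F, p.IsRoot r) : SimpleRealRoots p := by
  have h1 := st6_val_le hp F hr
  have h2 : p.roots = F.val := by
    refine (Multiset.eq_of_le_of_card_le h1 ?_).symm
    calc (Multiset.card p.roots) ≤ p.natDegree := p.card_roots'
      _ = F.val.card := hcard.symm
  refine ⟨hp, ?_, ?_⟩
  · rw [h2]; exact hcard
  · rw [h2]; exact F.nodup

/-! ### rootSep helpers -/

lemma st6_rootSep_le {p : Polynomial ℝ} {s t : ℝ} (hs : p.IsRoot s) (ht : p.IsRoot t)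
    (hst : s ≠ t) : rootSep p ≤ ENNReal.ofReal |s - t| := by
  unfold rootSep
  refine iInf_le_of_le s (iInf_le_of_le t (iInf_le_of_le hs (iInf_le_of_le ht ?_)))
  exact iInf_le _ hst

lemma st6_lt_rootSep {p : Polynomial ℝ} (hp : p ≠ 0) {d : ℝ} (hd : 0 ≤ d)
    (h : ∀ s t : ℝ, p.IsRoot s → p.IsRoot t → s ≠ t → d < |s - t|) :
    ENNReal.ofReal d < rootSep p := by
  by_cases hex : ∃ s t : ℝ, p.IsRoot s ∧ p.IsRoot t ∧ s ≠ t
  · obtain ⟨s0, t0, hs0, ht0, hne0⟩ := hex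
    classical
    set F : Finset ℝ := ((p.roots.toFinset ×ˢ p.roots.toFinset).filter
      fun q => q.1 ≠ q.2).image fun q => |q.1 - q.2| with hF
    have hmemF : ∀ {s t : ℝ}, p.IsRoot s → p.IsRoot t → s ≠ t → |s - t| ∈ F := by
      intro s t hs ht hst
      refine Finset.mem_image.mpr ⟨(s, t), ?_, rfl⟩
      refine Finset.mem_filter.mpr ⟨Finset.mem_product.mpr ⟨?_, ?_⟩, hst⟩
      · exact Multiset.mem_toFinset.mpr ((mem_roots hp).mpr hs)
      · exact Multiset.mem_toFinset.mpr ((mem_roots hp).mpr ht)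
    have hFne : F.Nonempty := ⟨_, hmemF hs0 ht0 hne0⟩
    set m := F.min' hFne with hm
    have hm_mem := F.min'_mem hFne
    obtain ⟨⟨s1, t1⟩, hq, hqe⟩ := Finset.mem_image.mp hm_mem
    have hq' := Finset.mem_filter.mp hq
    have hs1 : p.IsRoot s1 := (mem_roots hp).mp (Multiset.mem_toFinset.mp (Finset.mem_product.mp hq'.1).1)
    have ht1 : p.IsRoot t1 := (mem_roots hp).mp (Multiset.mem_toFinset.mp (Finset.mem_product.mp hq'.1).2)
    have hdm : d < m := by rw [hm, ← hqe]; exact h s1 t1 hs1 ht1 hq'.2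
    have hle : ENNReal.ofReal m ≤ rootSep p := by
      unfold rootSep
      refine le_iInf fun s => le_iInf fun t => le_iInf fun hs => le_iInf fun ht =>
        le_iInf fun hst => ?_
      exact ENNReal.ofReal_le_ofReal (F.min'_le _ (hmemF hs ht hst))
    calc ENNReal.ofReal d < ENNReal.ofReal m :=
          (ENNReal.ofReal_lt_ofReal_iff_of_nonneg hd).mpr hdm
      _ ≤ rootSep p := hle
  · have htop : rootSep p = ⊤ := by
      unfold rootSep
      rw [iInf_eq_top]
      intro s
      rw [iInf_eq_top]
      intro t
      by_cases hs : p.IsRoot s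
      · by_cases ht : p.IsRoot t
        · have hst : ¬ s ≠ t := fun hne => hex ⟨s, t, hs, ht, hne⟩
          rw [iInf_pos hs, iInf_pos ht, iInf_neg hst]
        · rw [iInf_pos hs, iInf_neg ht]
      · rw [iInf_neg hs]
    rw [htop]
    exact ENNReal.ofReal_lt_top

/-! ### No double roots in the pencil; Wronskian -/

noncomputable def st6W (f g : Polynomial ℝ) : Polynomial ℝ :=
  derivative f * g - f * derivative g

lemma st6_no_double_root {p : Polynomial ℝ} (h : SimpleRealRoots p) {x : ℝ}
    (h1 : p.eval x = 0) (h2 : (derivative p).eval x = 0) : False := by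
  obtain ⟨hp, hcard, hnodup⟩ := h
  have hroot : p.IsRoot x := h1
  have hd0 : derivative p ≠ 0 := by
    intro hz
    have hdeg : p.natDegree = 0 := natDegree_eq_zero_of_derivative_eq_zero hz
    obtain ⟨c, rfl⟩ := natDegree_eq_zero.mp hdeg
    simp only [eval_C] at h1
    exact hp (by rw [h1, map_zero])
  have hmul : 1 < p.rootMultiplicity x := by
    by_contra hle
    push_neg at hle
    have h1' : 0 < rootMultiplicity x p := (rootMultiplicity_pos hp).mpr hroot
    have heq : rootMultiplicity x p = 1 := le_antisymm hle h1'
    have hder := derivative_rootMultiplicity_of_root hroot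
    rw [heq] at hder
    have : 0 < rootMultiplicity x (derivative p) :=
      (rootMultiplicity_pos hd0).mpr h2
    omega
  have hcount : 1 < p.roots.count x := by rw [count_roots]; exact hmul
  have := Multiset.nodup_iff_count_le_one.mp hnodup x
  omega

lemma st6_W_ne_zero {n : ℕ} {f g : Polynomial ℝ}
    (hp : ∀ a b : ℝ, (a, b) ≠ (0, 0) → MemB n (a • f + b • g)) (x : ℝ) :
    (st6W f g).eval x ≠ 0 := by
  intro hW
  simp only [st6W, eval_sub, eval_mul] at hW
  have key : ∃ a b : ℝ, (a, b) ≠ (0, 0) ∧ (a • f + b • g).eval x = 0 ∧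
      (derivative (a • f + b • g)).eval x = 0 := by
    by_cases hf0 : f.eval x = 0
    · by_cases hf1 : (derivative f).eval x = 0
      · exact ⟨1, 0, by simp, by simp [hf0], by simp [hf1]⟩
      · have hg0 : g.eval x = 0 := by
          have : (derivative f).eval x * g.eval x = 0 := by
            rw [hf0] at hW; linarith
          exact (mul_eq_zero.mp this).resolve_left hf1
        refine ⟨-((derivative g).eval x), (derivative f).eval x, ?_, ?_, ?_⟩
        · simp only [ne_eq, Prod.mk.injEq, not_and]
          intro _; exact hf1
        · simp [hf0, hg0]
        · simp only [derivative_add, derivative_smul, eval_add, eval_smul, smul_eq_mul]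
          ring
    · refine ⟨-(g.eval x), f.eval x, ?_, ?_, ?_⟩
      · simp only [ne_eq, Prod.mk.injEq, not_and]
        intro _; exact hf0
      · simp only [eval_add, eval_smul, smul_eq_mul]; ring
      · simp only [derivative_add, derivative_smul, eval_add, eval_smul, smul_eq_mul]
        nlinarith [hW]
  obtain ⟨a, b, hab, hv, hdv⟩ := key
  exact st6_no_double_root ((hp a b hab).1) hv hdv

lemma st6_lcW {m : ℕ} {f P : Polynomial ℝ} (hf0 : f ≠ 0) (hP0 : P ≠ 0)
    (hf : f.natDegree = m) (hP : P.natDegree = m + 1) :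
    (st6W f P).leadingCoeff = -(f.leadingCoeff * P.leadingCoeff) := by
  have hlf : f.leadingCoeff ≠ 0 := leadingCoeff_ne_zero.mpr hf0
  have hlP : P.leadingCoeff ≠ 0 := leadingCoeff_ne_zero.mpr hP0
  have hcoefff : f.coeff m = f.leadingCoeff := by rw [← hf, coeff_natDegree]
  have hcoeffP : P.coeff (m + 1) = P.leadingCoeff := by rw [← hP, coeff_natDegree]
  have hP'd : (derivative P).natDegree = m := by
    have h1 : (derivative P).natDegree ≤ m := by
      have := natDegree_derivative_le P
      omega
    have h2 : (derivative P).coeff m ≠ 0 := by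
      rw [coeff_derivative, hcoeffP]
      have : ((m : ℝ) + 1) ≠ 0 := by positivity
      exact mul_ne_zero hlP this
    exact le_antisymm h1 (le_natDegree_of_ne_zero h2)
  have hlP' : (derivative P).leadingCoeff = P.leadingCoeff * ((m : ℝ) + 1) := by
    rw [leadingCoeff, hP'd, coeff_derivative, hcoeffP]
  rcases Nat.eq_zero_or_pos m with hm | hm
  · subst hm
    have hf' : derivative f = 0 := derivative_of_natDegree_zero hf
    have hW : st6W f P = -(f * derivative P) := by rw [st6W, hf']; ring
    rw [hW, leadingCoeff_neg, leadingCoeff_mul, hlP']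
    push_cast
    ring
  · have hm1 : m - 1 + 1 = m := Nat.sub_add_cancel hm
    have hcast : ((m - 1 : ℕ) : ℝ) + 1 = (m : ℝ) := by
      have := Nat.cast_sub hm (R := ℝ)
      rw [this]; push_cast; ring
    have hf'd : (derivative f).natDegree = m - 1 := by
      have h1 : (derivative f).natDegree ≤ m - 1 := by
        have := natDegree_derivative_le f
        omega
      have h2 : (derivative f).coeff (m - 1) ≠ 0 := by
        rw [coeff_derivative, hm1, hcoefff, hcast]
        have : ((m : ℝ)) ≠ 0 := by positivity
        exact mul_ne_zero hlf this
      exact le_antisymm h1 (le_natDegree_of_ne_zero h2)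
    have hlf' : (derivative f).leadingCoeff = f.leadingCoeff * (m : ℝ) := by
      rw [leadingCoeff, hf'd, coeff_derivative, hm1, hcoefff, hcast]
    have hc1 : (derivative f * P).coeff (2 * m) = f.leadingCoeff * (m : ℝ) * P.leadingCoeff := by
      have hidx : 2 * m = (derivative f).natDegree + P.natDegree := by
        rw [hf'd, hP]; omega
      rw [hidx, coeff_mul_degree_add_degree, hlf']
    have hc2 : (f * derivative P).coeff (2 * m) =
        f.leadingCoeff * (P.leadingCoeff * ((m : ℝ) + 1)) := by
      have hidx : 2 * m = f.natDegree + (derivative P).natDegree := by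
        rw [hf, hP'd]; omega
      rw [hidx, coeff_mul_degree_add_degree, hlP']
    have hcW : (st6W f P).coeff (2 * m) = -(f.leadingCoeff * P.leadingCoeff) := by
      rw [st6W, coeff_sub, hc1, hc2]; ring
    have hWdle : (st6W f P).natDegree ≤ 2 * m := by
      refine le_trans (natDegree_sub_le _ _) ?_
      refine max_le ?_ ?_
      · refine le_trans (natDegree_mul_le) ?_
        rw [hf'd, hP]; omega
      · refine le_trans (natDegree_mul_le) ?_
        rw [hf, hP'd]; omega
    have hWne : (st6W f P).coeff (2 * m) ≠ 0 := by
      rw [hcW]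
      exact neg_ne_zero.mpr (mul_ne_zero hlf hlP)
    have hWd : (st6W f P).natDegree = 2 * m :=
      le_antisymm hWdle (le_natDegree_of_ne_zero hWne)
    rw [leadingCoeff, hWd, hcW]

/-! ### Sorted list helpers -/

lemma st6_sorted_head_le {l : List ℝ} (hl : l.Pairwise (· < ·)) {x : ℝ} (hx : x ∈ l)
    (hne : l ≠ []) : l.head hne ≤ x := by
  cases l with
  | nil => exact absurd rfl hne
  | cons a t =>
    rw [List.head_cons]
    rcases List.mem_cons.mp hx with rfl | hx'
    · exact le_refl _
    · exact le_of_lt ((List.pairwise_cons.mp hl).1 x hx')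

lemma st6_sorted_le_getLast {l : List ℝ} (hl : l.Pairwise (· < ·)) {x : ℝ} (hx : x ∈ l)
    (hne : l ≠ []) : x ≤ l.getLast hne := by
  induction l with
  | nil => exact absurd hx List.not_mem_nil
  | cons a t ih =>
    cases t with
    | nil =>
      rcases List.mem_cons.mp hx with rfl | hx'
      · simp [List.getLast]
      · exact absurd hx' List.not_mem_nil
    | cons b t' =>
      rw [List.getLast_cons (by simp : (b :: t') ≠ [])]
      rcases List.mem_cons.mp hx with rfl | hx'
      · have hlast : (b :: t').getLast (by simp) ∈ b :: t' := List.getLast_mem _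
        exact le_of_lt ((List.pairwise_cons.mp hl).1 _ hlast)
      · exact ih (List.pairwise_cons.mp hl).2 hx' (by simp)

/-! ### Interior roots from sign alternation -/

lemma st6_interior (S : Polynomial ℝ) :
    ∀ L : List ℝ, L.Pairwise (· < ·) →
      L.Chain' (fun a b => S.eval a * S.eval b < 0) →
      ∃ F : Finset ℝ, F.card = L.length - 1 ∧
        ∀ r ∈ F, S.IsRoot r ∧ ∀ hne : L ≠ [], L.head hne < r ∧ r < L.getLast hne := by
  intro L
  induction L with
  | nil => intro _ _; exact ⟨∅, by simp, by simp⟩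
  | cons a t ih =>
    intro hsort hchain
    cases t with
    | nil => exact ⟨∅, by simp, by simp⟩
    | cons b t' =>
      have hsort' : (b :: t').Pairwise (· < ·) := (List.pairwise_cons.mp hsort).2
      have hchain' : (b :: t').Chain' (fun a b => S.eval a * S.eval b < 0) := hchain.tail
      obtain ⟨F', hcard', hF'⟩ := ih hsort' hchain'
      have hab : a < b := (List.pairwise_cons.mp hsort).1 b (by simp)
      have hS : S.eval a * S.eval b < 0 := (List.isChain_cons_cons.mp hchain).1
      obtain ⟨z, hz, hz0⟩ := st6_root_Ioo hab hS
      have hble : b ≤ (b :: t').getLast (by simp) :=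
        st6_sorted_le_getLast hsort' (by simp) (by simp)
      have hznotin : z ∉ F' := by
        intro hzF
        have hb := (hF' z hzF).2 (by simp)
        rw [List.head_cons] at hb
        linarith [hz.2, hb.1]
      refine ⟨insert z F', ?_, ?_⟩
      · rw [Finset.card_insert_of_notMem hznotin, hcard']
        simp only [List.length_cons]
        omega
      · intro r hr
        rcases Finset.mem_insert.mp hr with rfl | hr'
        · refine ⟨hz0, fun hne => ?_⟩
          rw [List.head_cons, List.getLast_cons (by simp : (b :: t') ≠ [])]
          exact ⟨hz.1, by linarith [hz.2]⟩
        · obtain ⟨hroot, hbounds⟩ := hF' r hr'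
          refine ⟨hroot, fun hne => ?_⟩
          have hb := hbounds (by simp)
          rw [List.head_cons] at hb
          rw [List.head_cons, List.getLast_cons (by simp : (b :: t') ≠ [])]
          exact ⟨by linarith [hb.1], hb.2⟩

lemma st6_alt_sign (S : Polynomial ℝ) :
    ∀ (L : List ℝ) (hne : L ≠ []), L.Chain' (fun a b => S.eval a * S.eval b < 0) →
      (∀ t ∈ L, S.eval t ≠ 0) →
      0 < S.eval (L.head hne) * S.eval (L.getLast hne) * (-1) ^ (L.length - 1) := by
  intro L
  induction L with
  | nil => intro hne; exact absurd rfl hne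
  | cons a t ih =>
    intro hne hchain hne0
    cases t with
    | nil =>
      simp only [List.head_cons, List.getLast_singleton, List.length_cons,
        List.length_nil, Nat.add_sub_cancel, pow_zero, mul_one]
      exact mul_self_pos.mpr (hne0 a (by simp))
    | cons b t' =>
      have h' := ih (by simp) hchain.tail (fun u hu => hne0 u (by simp [hu]))
      have hab : S.eval a * S.eval b < 0 := (List.isChain_cons_cons.mp hchain).1
      rw [List.head_cons] at h' ⊢
      rw [List.getLast_cons (by simp : (b :: t') ≠ [])]
      simp only [List.length_cons, Nat.add_sub_cancel] at h' ⊢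
      set k := ((-1 : ℝ)) ^ t'.length with hk
      set B := S.eval b
      set A := S.eval a
      set Cc := S.eval ((b :: t').getLast (by simp))
      have h'' : 0 < (Cc * k) * B := by nlinarith [h']
      have hba : B * A < 0 := by nlinarith [hab]
      have := st6_negg h'' hba
      rw [pow_succ]
      nlinarith [this]

/-! ### The root-counting lemma -/

lemma st6_count (S : Polynomial ℝ) (hS : S ≠ 0) (L : List ℝ)
    (hsort : L.Pairwise (· < ·))
    (hchain : L.Chain' (fun a b => S.eval a * S.eval b < 0))
    (hne0 : ∀ t ∈ L, S.eval t ≠ 0)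
    (hcase : S.natDegree + 1 = L.length ∨ S.natDegree = L.length ∨
      (S.natDegree = L.length + 1 ∧
        ∀ hne : L ≠ [], S.eval (L.getLast hne) * S.leadingCoeff < 0)) :
    SimpleRealRoots S := by
  obtain ⟨F, hFcard, hF⟩ := st6_interior S L hsort hchain
  by_cases hne : L = []
  · subst hne
    rcases hcase with h1 | h2 | ⟨h3, _⟩
    · simp at h1
    · exact st6_simple hS ∅ (by simpa using h2.symm) (by simp)
    · -- natDegree = 1, find one root between xm and xp
      simp only [List.length_nil] at h3
      obtain ⟨xp, hxp1, hxp2⟩ := ((st6_ev_top hS).and (eventually_gt_atTop (0:ℝ))).exists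
      obtain ⟨xm, hxm1, hxm2⟩ := ((st6_ev_bot hS).and (eventually_lt_atBot (0:ℝ))).exists
      rw [h3, pow_one] at hxm1
      have hAE : S.eval xm * S.eval xp < 0 := by
        nlinarith [mul_pos hxp1 (by linarith : (0:ℝ) < -(S.eval xm * S.leadingCoeff)),
          sq_nonneg S.leadingCoeff]
      obtain ⟨z, hz, hz0⟩ := st6_root_Ioo (by linarith : xm < xp) hAE
      refine st6_simple hS {z} (by simp [h3]) (by simpa using hz0)
  · have hhead : L.head hne ∈ L := List.head_mem hne
    have hlast : L.getLast hne ∈ L := List.getLast_mem hne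
    have hlen1 : 1 ≤ L.length := by
      cases L with
      | nil => exact absurd rfl hne
      | cons a t => simp
    obtain ⟨xp, hxp1, hxp2⟩ :=
      ((st6_ev_top hS).and (eventually_gt_atTop (L.getLast hne))).exists
    obtain ⟨xm, hxm1, hxm2⟩ :=
      ((st6_ev_bot hS).and (eventually_lt_atBot (L.head hne))).exists
    set A := S.eval xm with hA
    set B := S.eval (L.head hne) with hB
    set Cc := S.eval (L.getLast hne) with hCc
    set E := S.eval xp with hE
    set lc := S.leadingCoeff with hlc
    set k := ((-1 : ℝ)) ^ (L.length - 1) with hk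
    have hBne : B ≠ 0 := hne0 _ hhead
    have hCne : Cc ≠ 0 := hne0 _ hlast
    have hEne : E ≠ 0 := by intro h0; rw [h0] at hxp1; simp at hxp1
    have hAne : A ≠ 0 := by intro h0; rw [h0] at hxm1; simp at hxm1
    have hBCk : 0 < B * Cc * k := st6_alt_sign S L hne hchain hne0
    have hFin : ∀ r ∈ F, L.head hne < r ∧ r < L.getLast hne := fun r hr => (hF r hr).2 hne
    have hFroot : ∀ r ∈ F, S.IsRoot r := fun r hr => (hF r hr).1
    rcases hcase with h1 | h2 | ⟨h3, hsgn⟩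
    · exact st6_simple hS F (by omega) hFroot
    · -- D = L.length : need one end root
      by_cases hCE : Cc * E < 0
      · obtain ⟨z, hz, hz0⟩ := st6_root_Ioo hxp2 hCE
        have hznotin : z ∉ F := fun hzF => by linarith [(hFin z hzF).2, hz.1]
        refine st6_simple hS (insert z F) ?_ ?_
        · rw [Finset.card_insert_of_notMem hznotin, hFcard]; omega
        · intro r hr
          rcases Finset.mem_insert.mp hr with rfl | hr'
          · exact hz0
          · exact hFroot r hr'
      · by_cases hAB : A * B < 0
        · obtain ⟨z, hz, hz0⟩ := st6_root_Ioo hxm2 hAB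
          have hznotin : z ∉ F := fun hzF => by linarith [(hFin z hzF).1, hz.2]
          refine st6_simple hS (insert z F) ?_ ?_
          · rw [Finset.card_insert_of_notMem hznotin, hFcard]; omega
          · intro r hr
            rcases Finset.mem_insert.mp hr with rfl | hr'
            · exact hz0
            · exact hFroot r hr'
        · exfalso
          have hCE' : 0 < Cc * E := by
            rcases lt_trichotomy (Cc * E) 0 with h | h | h
            · exact absurd h hCE
            · rcases mul_eq_zero.mp h with h | h
              · exact absurd h hCne
              · exact absurd h hEne
            · exact h
          have hAB' : 0 < A * B := by
            rcases lt_trichotomy (A * B) 0 with h | h | h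
            · exact absurd h hAB
            · rcases mul_eq_zero.mp h with h | h
              · exact absurd h hAne
              · exact absurd h hBne
            · exact h
          have hAE : 0 < A * E * ((-1 : ℝ)) ^ S.natDegree := by
            nlinarith [mul_pos hxm1 hxp1, sq_nonneg lc]
          have hAEk : A * E * k < 0 := by
            have hlenD : S.natDegree = (L.length - 1) + 1 := by omega
            rw [hlenD, pow_succ] at hAE
            nlinarith [hAE]
          nlinarith [mul_pos (mul_pos hAB' hCE') hBCk, hAEk, sq_nonneg (B * Cc)]
    · -- D = L.length + 1, both end roots
      have hCl : Cc * lc < 0 := hsgn hne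
      have hCE : Cc * E < 0 := by
        nlinarith [mul_pos hxp1 (by linarith : (0:ℝ) < -(Cc * lc)), sq_nonneg lc]
      obtain ⟨zp, hzp, hzp0⟩ := st6_root_Ioo hxp2 hCE
      have hpow : ((-1 : ℝ)) ^ S.natDegree = k := by
        rw [h3, show L.length + 1 = (L.length - 1) + 2 from by omega, pow_add]
        simp [hk]
      have hAk : 0 < A * lc * k := by rw [hpow] at hxm1; exact hxm1
      have hACk : (A * k) * Cc < 0 := by
        nlinarith [mul_pos hAk (by linarith : (0:ℝ) < -(Cc * lc)), sq_nonneg lc]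
      have hAB : A * B < 0 := by
        nlinarith [mul_pos hBCk (by linarith : (0:ℝ) < -((A * k) * Cc)), sq_nonneg (Cc * k)]
      obtain ⟨zm, hzm, hzm0⟩ := st6_root_Ioo hxm2 hAB
      have hzpnotin : zp ∉ F := fun hzF => by linarith [(hFin zp hzF).2, hzp.1]
      have hhl : L.head hne ≤ L.getLast hne := st6_sorted_le_getLast hsort hhead hne
      have hzmnotin : zm ∉ insert zp F := by
        intro h
        rcases Finset.mem_insert.mp h with rfl | h'
        · linarith [hzm.2, hzp.1]
        · linarith [(hFin zm h').1, hzm.2]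
      refine st6_simple hS (insert zm (insert zp F)) ?_ ?_
      · rw [Finset.card_insert_of_notMem hzmnotin,
          Finset.card_insert_of_notMem hzpnotin, hFcard]
        omega
      · intro r hr
        rcases Finset.mem_insert.mp hr with rfl | hr'
        · exact hzm0
        · rcases Finset.mem_insert.mp hr' with rfl | hr''
          · exact hzp0
          · exact hFroot r hr''

/-! ### The separation argument -/

lemma st6_sep_aux {d : ℝ} (hd : 0 ≤ d) (f Pp : Polynomial ℝ)
    (hPs : ∀ a b : ℝ, (a, b) ≠ (0, 0) → ENNReal.ofReal d < rootSep (a • f + b • Pp))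
    {x y : ℝ} (hxy : x < y) (hfx : f.eval x ≠ 0)
    (hdM : (f.eval x * (derivative Pp).eval x - Pp.eval x * (derivative f).eval x) *
      (f.eval x * Pp.eval y - Pp.eval x * f.eval y) < 0 ∨
      f.eval x * Pp.eval y - Pp.eval x * f.eval y = 0)
    (hdM0 : f.eval x * (derivative Pp).eval x - Pp.eval x * (derivative f).eval x ≠ 0) :
    d < y - x := by
  set M : Polynomial ℝ := (-(Pp.eval x)) • f + (f.eval x) • Pp with hM
  have hpair : ((-(Pp.eval x)), f.eval x) ≠ ((0:ℝ), (0:ℝ)) := by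
    simp only [ne_eq, Prod.mk.injEq, not_and]
    intro _; exact hfx
  have hsep := hPs _ _ hpair
  have hMx : M.eval x = 0 := by
    simp only [hM, eval_add, eval_smul, smul_eq_mul]; ring
  have hM'x : (derivative M).eval x =
      f.eval x * (derivative Pp).eval x - Pp.eval x * (derivative f).eval x := by
    simp only [hM, derivative_add, derivative_smul, eval_add, eval_smul, smul_eq_mul]; ring
  have hMy : M.eval y = f.eval x * Pp.eval y - Pp.eval x * f.eval y := by
    simp only [hM, eval_add, eval_smul, smul_eq_mul]; ring
  rcases hdM with hlt | heq
  · have hdM0' : (derivative M).eval x ≠ 0 := by rw [hM'x]; exact hdM0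
    obtain ⟨u, hu, hu0⟩ := st6_deriv_right hMx hdM0' hxy
    have hMyne : M.eval u * M.eval y < 0 := by
      rw [hM'x] at hu0
      rw [hMy]
      exact st6_negg hu0 hlt
    obtain ⟨z, hz, hz0⟩ := st6_root_Ioo hu.2 hMyne
    have hxz : x < z := lt_trans hu.1 hz.1
    have hle := st6_rootSep_le (show M.IsRoot x from hMx) hz0 (ne_of_lt hxz)
    have hlt2 : ENNReal.ofReal d < ENNReal.ofReal |x - z| := lt_of_lt_of_le hsep hle
    have hfin : d < |x - z| := (ENNReal.ofReal_lt_ofReal_iff_of_nonneg hd).mp hlt2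
    rw [abs_sub_comm, abs_of_pos (by linarith : (0:ℝ) < z - x)] at hfin
    linarith [hz.2]
  · have hy : M.IsRoot y := by rw [IsRoot, hMy]; exact heq
    have hle := st6_rootSep_le (show M.IsRoot x from hMx) hy (ne_of_lt hxy)
    have hlt2 : ENNReal.ofReal d < ENNReal.ofReal |x - y| := lt_of_lt_of_le hsep hle
    have hfin : d < |x - y| := (ENNReal.ofReal_lt_ofReal_iff_of_nonneg hd).mp hlt2
    rw [abs_sub_comm, abs_of_pos (by linarith : (0:ℝ) < y - x)] at hfin
    linarith

/-! ### The core lemma -/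

set_option maxHeartbeats 2000000 in
lemma st6_core {n : ℕ} (hn : 0 < n) {d : ℝ} (hd : 0 ≤ d) (f P Q : Polynomial ℝ)
    (hf : MemB n f)
    (hPm : ∀ a b : ℝ, (a, b) ≠ (0, 0) → MemB n (a • f + b • P))
    (hQm : ∀ a b : ℝ, (a, b) ≠ (0, 0) → MemB n (a • f + b • Q))
    (hPs : ∀ a b : ℝ, (a, b) ≠ (0, 0) → ENNReal.ofReal d < rootSep (a • f + b • P))
    (hQs : ∀ a b : ℝ, (a, b) ≠ (0, 0) → ENNReal.ofReal d < rootSep (a • f + b • Q))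
    (hsign : ∀ x : ℝ, 0 < (st6W f P).eval x * (st6W f Q).eval x)
    (hB : f.natDegree = n - 1 → f.natDegree ≠ n →
      P.natDegree = n ∧ Q.natDegree = n ∧ 0 < P.leadingCoeff * Q.leadingCoeff) :
    MemB n (P + Q) ∧ ENNReal.ofReal d < rootSep (P + Q) := by
  classical
  have hf0 : f ≠ 0 := hf.1.1
  set S := P + Q with hS
  have hWPne : ∀ x, (st6W f P).eval x ≠ 0 := fun x h0 => by
    have h1 := hsign x; rw [h0, zero_mul] at h1; exact lt_irrefl 0 h1
  have hWQne : ∀ x, (st6W f Q).eval x ≠ 0 := fun x h0 => by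
    have h1 := hsign x; rw [h0, mul_zero] at h1; exact lt_irrefl 0 h1
  have hPmem : MemB n P := by have := hPm 0 1 (by simp); simpa using this
  have hQmem : MemB n Q := by have := hQm 0 1 (by simp); simpa using this
  have hdegP : P.natDegree ≤ n := by rcases hPmem.2 with h | h <;> omega
  have hdegQ : Q.natDegree ≤ n := by rcases hQmem.2 with h | h <;> omega
  have hdegS : S.natDegree ≤ n := le_trans (natDegree_add_le P Q) (max_le hdegP hdegQ)
  have hWPval : ∀ x, f.eval x = 0 →
      (st6W f P).eval x = (derivative f).eval x * P.eval x := fun x hx => by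
    simp [st6W, eval_sub, eval_mul, hx]
  have hWQval : ∀ x, f.eval x = 0 →
      (st6W f Q).eval x = (derivative f).eval x * Q.eval x := fun x hx => by
    simp [st6W, eval_sub, eval_mul, hx]
  have hf'ne : ∀ x, f.eval x = 0 → (derivative f).eval x ≠ 0 := fun x hx h0 =>
    hWPne x (by rw [hWPval x hx, h0, zero_mul])
  have hPQpos : ∀ x, f.eval x = 0 → 0 < P.eval x * Q.eval x := fun x hx => by
    have h1 := hsign x
    rw [hWPval x hx, hWQval x hx] at h1
    exact st6_mixg2 h1
  have hSPpos : ∀ x, f.eval x = 0 → 0 < S.eval x * P.eval x := fun x hx => by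
    have h1 := hPQpos x hx
    have hPne : P.eval x ≠ 0 := fun h0 => by rw [h0, zero_mul] at h1; exact lt_irrefl 0 h1
    rw [hS, eval_add]
    nlinarith [h1, mul_self_pos.mpr hPne]
  have hSne : ∀ x, f.eval x = 0 → S.eval x ≠ 0 := fun x hx h0 => by
    have h1 := hSPpos x hx; rw [h0, zero_mul] at h1; exact lt_irrefl 0 h1
  -- pairwise alternation of S at roots of f with no roots between
  have hSS : ∀ a b : ℝ, f.IsRoot a → f.IsRoot b → a < b →
      (∀ z, a < z → z < b → ¬ f.IsRoot z) → S.eval a * S.eval b < 0 := by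
    intro a b haroot hbroot hab hnoroot
    have hfa' : (derivative f).eval a ≠ 0 := hf'ne a haroot
    have hfb' : (derivative f).eval b ≠ 0 := hf'ne b hbroot
    set w := (a + b) / 2 with hw
    have hwa : a < w := by rw [hw]; linarith
    have hwb : w < b := by rw [hw]; linarith
    obtain ⟨u1, hu1, hu1s⟩ := st6_deriv_right haroot hfa' hwa
    obtain ⟨u2, hu2, hu2s⟩ := st6_deriv_left hbroot hfb' hwb
    have hsw1 : 0 < f.eval u1 * f.eval w := by
      apply st6_same_sign_of_no_root hu1.2
      intro z hz hzr
      exact hnoroot z (lt_of_lt_of_le hu1.1 hz.1) (lt_of_le_of_lt hz.2 hwb) hzr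
    have hsw2 : 0 < f.eval w * f.eval u2 := by
      apply st6_same_sign_of_no_root hu2.1
      intro z hz hzr
      exact hnoroot z (lt_of_lt_of_le hwa hz.1) (lt_of_le_of_lt hz.2 hu2.2) hzr
    have c1 : 0 < (derivative f).eval a * f.eval u1 := by nlinarith [hu1s]
    have c2 : 0 < (derivative f).eval a * f.eval w := st6_possg c1 hsw1
    have c3 : 0 < (derivative f).eval a * f.eval u2 := st6_possg c2 hsw2
    have c4 : (derivative f).eval a * (derivative f).eval b < 0 := st6_negg c3 hu2s
    have hWcs := st6_const_sign hWPne a b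
    rw [hWPval a haroot, hWPval b hbroot] at hWcs
    have hPab : P.eval a * P.eval b < 0 := st6_mixg hWcs c4
    have hSa := hSPpos a haroot
    have hSb := hSPpos b hbroot
    have s1 : S.eval a * P.eval b < 0 := st6_negg hSa hPab
    have h2' : P.eval b * S.eval a < 0 := by nlinarith [s1]
    have s2 := st6_negg hSb h2'
    nlinarith [s2]
  obtain ⟨L, hL⟩ : ∃ L : List ℝ, L = f.roots.toFinset.sort (· ≤ ·) := ⟨_, rfl⟩
  have hsort : L.Pairwise (· < ·) := by rw [hL]; exact (Finset.sortedLT_sort _).pairwise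
  have hmemL : ∀ x, x ∈ L ↔ f.IsRoot x := fun x => by
    rw [hL, Finset.mem_sort, Multiset.mem_toFinset, mem_roots hf0]
  have hlen : L.length = f.natDegree := by
    rw [hL, Finset.length_sort, Multiset.toFinset_card_of_nodup hf.1.2.2, hf.1.2.1]
  have hchain : L.Chain' (fun a b => S.eval a * S.eval b < 0) := by
    rw [List.Chain', List.isChain_iff_getElem]
    intro i hi
    apply hSS
    · exact (hmemL _).mp (List.getElem_mem _)
    · exact (hmemL _).mp (List.getElem_mem _)
    · exact hsort.sortedLT.strictMono_get
        (show (⟨i, by omega⟩ : Fin L.length) < ⟨i + 1, hi⟩ by simp [Fin.lt_def])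
    · intro z hz1 hz2 hzroot
      have hzL : z ∈ L := (hmemL z).mpr hzroot
      obtain ⟨j, hj⟩ := List.mem_iff_get.mp hzL
      rcases Nat.lt_or_ge j.val (i + 1) with hj1 | hj1
      · have hle : L.get j ≤ L.get ⟨i, by omega⟩ :=
          hsort.sortedLT.strictMono_get.monotone (by simp [Fin.le_def]; omega)
        rw [hj] at hle
        have hle' : z ≤ L[i] := hle
        linarith
      · have hle : L.get ⟨i + 1, by omega⟩ ≤ L.get j :=
          hsort.sortedLT.strictMono_get.monotone (by simp [Fin.le_def]; omega)
        rw [hj] at hle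
        have hle' : L[i + 1] ≤ z := hle
        linarith
  have hne0L : ∀ t ∈ L, S.eval t ≠ 0 := fun t ht => hSne t ((hmemL t).mp ht)
  obtain ⟨F, hFcard, hFr⟩ := st6_interior S L hsort hchain
  have hkey : S ≠ 0 ∧ MemB n S := by
    rcases hf.2 with hdegf | hdegf
    · -- deg f = n
      have hlenn : L.length = n := by rw [hlen, hdegf]
      have hLne : L ≠ [] := by
        intro h0; rw [h0] at hlenn; simp at hlenn; omega
      have hSne0 : S ≠ 0 := by
        intro h0
        have h1 := hne0L (L.head hLne) (List.head_mem hLne)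
        rw [h0] at h1; simp at h1
      have hDge : n - 1 ≤ S.natDegree := by
        have := st6_card_le hSne0 F (fun r hr => (hFr r hr).1)
        omega
      have hcase : S.natDegree + 1 = L.length ∨ S.natDegree = L.length ∨
          (S.natDegree = L.length + 1 ∧
            ∀ hne : L ≠ [], S.eval (L.getLast hne) * S.leadingCoeff < 0) := by
        rcases (show S.natDegree = n - 1 ∨ S.natDegree = n by omega) with hD | hD
        · left; omega
        · right; left; omega
      have hsimple := st6_count S hSne0 L hsort hchain hne0L hcase
      exact ⟨hSne0, hsimple, by omega⟩
    · -- deg f = n - 1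
      obtain ⟨hPn, hQn, hlcPQ⟩ := hB hdegf (by omega)
      have hcoefP : P.coeff n = P.leadingCoeff := by rw [← hPn, coeff_natDegree]
      have hcoefQ : Q.coeff n = Q.leadingCoeff := by rw [← hQn, coeff_natDegree]
      have hcoefS : S.coeff n = P.leadingCoeff + Q.leadingCoeff := by
        rw [hS, coeff_add, hcoefP, hcoefQ]
      have hsum_ne : P.leadingCoeff + Q.leadingCoeff ≠ 0 := by
        intro h0
        nlinarith [hlcPQ, sq_nonneg (P.leadingCoeff + Q.leadingCoeff),
          sq_nonneg (P.leadingCoeff - Q.leadingCoeff)]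
      have hDn : S.natDegree = n :=
        le_antisymm hdegS (le_natDegree_of_ne_zero (by rw [hcoefS]; exact hsum_ne))
      have hSne0 : S ≠ 0 := by
        intro h0
        have := hDn; rw [h0, natDegree_zero] at this; omega
      have hlcS : S.leadingCoeff = P.leadingCoeff + Q.leadingCoeff := by
        rw [leadingCoeff, hDn, hcoefS]
      have hlcSP : 0 < S.leadingCoeff * P.leadingCoeff := by
        rw [hlcS]; nlinarith [hlcPQ, sq_nonneg P.leadingCoeff]
      have hlenn : L.length = n - 1 := by rw [hlen, hdegf]
      by_cases hLe : L = []
      · have hlen0 : L.length = 0 := by rw [hLe]; rfl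
        have hcase : S.natDegree + 1 = L.length ∨ S.natDegree = L.length ∨
            (S.natDegree = L.length + 1 ∧
              ∀ hne : L ≠ [], S.eval (L.getLast hne) * S.leadingCoeff < 0) :=
          Or.inr (Or.inr ⟨by omega, fun hne => absurd hLe hne⟩)
        have hsimple := st6_count S hSne0 L hsort hchain hne0L hcase
        exact ⟨hSne0, hsimple, Or.inl hDn⟩
      · obtain ⟨t, htdef⟩ : ∃ t : ℝ, t = L.getLast hLe := ⟨_, rfl⟩
        have htroot : f.IsRoot t := (hmemL t).mp (by rw [htdef]; exact List.getLast_mem hLe)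
        have htmax : ∀ r, f.IsRoot r → r ≤ t := fun r hr => by
          rw [htdef]; exact st6_sorted_le_getLast hsort ((hmemL r).mpr hr) hLe
        have hft' : (derivative f).eval t ≠ 0 := hf'ne t htroot
        obtain ⟨x1, hx1s, hx1gt⟩ := ((st6_ev_top hf0).and (eventually_gt_atTop t)).exists
        obtain ⟨u, hu, hus⟩ := st6_deriv_right htroot hft' hx1gt
        have hnr : 0 < f.eval u * f.eval x1 := by
          apply st6_same_sign_of_no_root hu.2
          intro z hz hzr
          have := htmax z hzr
          linarith [hu.1, hz.1]
        have hf't : 0 < (derivative f).eval t * f.leadingCoeff := by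
          have c1 : 0 < (derivative f).eval t * f.eval u := by nlinarith [hus]
          have c2 := st6_possg c1 hnr
          exact st6_possg c2 hx1s
        have hP0 : P ≠ 0 := hPmem.1.1
        have hWP0 : st6W f P ≠ 0 := fun h0 => hWPne 0 (by rw [h0]; simp)
        have hlcWP := st6_lcW hf0 hP0 hdegf (by omega : P.natDegree = (n - 1) + 1)
        obtain ⟨x2, hx2⟩ := (st6_ev_top hWP0).exists
        rw [hlcWP] at hx2
        have hWcs := st6_const_sign hWPne t x2
        rw [hWPval t htroot] at hWcs
        have hx2' : (st6W f P).eval x2 * (f.leadingCoeff * P.leadingCoeff) < 0 := by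
          nlinarith [hx2]
        have e1 := st6_negg hWcs hx2'
        have e2 : P.eval t * P.leadingCoeff < 0 := by
          nlinarith [e1, hf't]
        have hSP := hSPpos t htroot
        have q1 : S.eval t * P.leadingCoeff < 0 := st6_negg hSP e2
        have q2 : P.leadingCoeff * S.eval t < 0 := by nlinarith [q1]
        have q3 := st6_negg hlcSP q2
        have hlastsign : S.eval t * S.leadingCoeff < 0 := by nlinarith [q3]
        have hcase : S.natDegree + 1 = L.length ∨ S.natDegree = L.length ∨
            (S.natDegree = L.length + 1 ∧
              ∀ hne : L ≠ [], S.eval (L.getLast hne) * S.leadingCoeff < 0) :=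
          Or.inr (Or.inr ⟨by omega, fun hne => by rw [← htdef]; exact hlastsign⟩)
        have hsimple := st6_count S hSne0 L hsort hchain hne0L hcase
        exact ⟨hSne0, hsimple, Or.inl hDn⟩
  obtain ⟨hSne0, hmemB⟩ := hkey
  refine ⟨hmemB, ?_⟩
  have key : ∀ x y : ℝ, S.IsRoot x → S.IsRoot y → x < y → d < y - x := by
    intro x y hx hy hxy
    have hsx : P.eval x + Q.eval x = 0 := by
      have h1 : S.eval x = 0 := hx
      rw [hS, eval_add] at h1; exact h1
    have hsy : P.eval y + Q.eval y = 0 := by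
      have h1 : S.eval y = 0 := hy
      rw [hS, eval_add] at h1; exact h1
    have hfx : f.eval x ≠ 0 := by
      intro h0
      have h1 := hsign x
      rw [hWPval x h0, hWQval x h0] at h1
      have hq : Q.eval x = -(P.eval x) := by linarith
      rw [hq] at h1
      nlinarith [sq_nonneg ((derivative f).eval x * P.eval x)]
    have hY12 : (f.eval x * P.eval y - P.eval x * f.eval y) +
        (f.eval x * Q.eval y - Q.eval x * f.eval y) = 0 := by
      linear_combination f.eval x * hsy - f.eval y * hsx
    have hD12 : 0 < (f.eval x * (derivative P).eval x - P.eval x * (derivative f).eval x) *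
        (f.eval x * (derivative Q).eval x - Q.eval x * (derivative f).eval x) := by
      have h1 := hsign x
      have e1 : (st6W f P).eval x =
          -(f.eval x * (derivative P).eval x - P.eval x * (derivative f).eval x) := by
        simp [st6W, eval_sub, eval_mul]; ring
      have e2 : (st6W f Q).eval x =
          -(f.eval x * (derivative Q).eval x - Q.eval x * (derivative f).eval x) := by
        simp [st6W, eval_sub, eval_mul]; ring
      rw [e1, e2] at h1
      nlinarith [h1]
    have hD1ne : f.eval x * (derivative P).eval x - P.eval x * (derivative f).eval x ≠ 0 := by
      intro h0; rw [h0, zero_mul] at hD12; exact lt_irrefl 0 hD12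
    have hD2ne : f.eval x * (derivative Q).eval x - Q.eval x * (derivative f).eval x ≠ 0 := by
      intro h0; rw [h0, mul_zero] at hD12; exact lt_irrefl 0 hD12
    by_cases hY10 : f.eval x * P.eval y - P.eval x * f.eval y = 0
    · exact st6_sep_aux hd f P hPs hxy hfx (Or.inr hY10) hD1ne
    · have hY20 : f.eval x * Q.eval y - Q.eval x * f.eval y ≠ 0 := by
        intro h0; apply hY10; linarith [hY12]
      have hY2eq : f.eval x * Q.eval y - Q.eval x * f.eval y =
          -(f.eval x * P.eval y - P.eval x * f.eval y) := by linarith [hY12]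
      have hyy : (f.eval x * P.eval y - P.eval x * f.eval y) *
          (f.eval x * Q.eval y - Q.eval x * f.eval y) < 0 := by
        rw [hY2eq]
        nlinarith [mul_self_pos.mpr hY10]
      have hprod : ((f.eval x * (derivative P).eval x - P.eval x * (derivative f).eval x) *
          (f.eval x * P.eval y - P.eval x * f.eval y)) *
          ((f.eval x * (derivative Q).eval x - Q.eval x * (derivative f).eval x) *
          (f.eval x * Q.eval y - Q.eval x * f.eval y)) < 0 := by
        nlinarith [mul_pos hD12 (neg_pos.mpr hyy)]
      rcases mul_neg_iff.mp hprod with ⟨hp1, hp2⟩ | ⟨hp1, hp2⟩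
      · exact st6_sep_aux hd f Q hQs hxy hfx (Or.inl hp2) hD2ne
      · exact st6_sep_aux hd f P hPs hxy hfx (Or.inl hp1) hD1ne
  apply st6_lt_rootSep hSne0 hd
  intro s t hs ht hst
  rcases lt_or_gt_of_ne hst with hlt | hlt
  · have := key s t hs ht hlt
    rw [abs_of_neg (by linarith : s - t < 0)]
    linarith
  · have := key t s ht hs hlt
    rw [abs_of_pos (by linarith : 0 < s - t)]
    linarith

/-! ### Degree of the partner polynomial when `deg f = n - 1` -/

lemma st6_degg {n : ℕ} (hn : 0 < n) {f g : Polynomial ℝ} (hfd : f.natDegree = n - 1)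
    (hfn : f.natDegree ≠ n)
    (hp : ∀ a b : ℝ, (a, b) ≠ (0, 0) → MemB n (a • f + b • g))
    (hg : MemB n g) : g.natDegree = n := by
  rcases hg.2 with h | h
  · exact h
  · exfalso
    have hf0 : f ≠ 0 := by
      have := (hp 1 0 (by simp)).1.1
      simpa using this
    have hg0 : g ≠ 0 := hg.1.1
    have hlf : f.leadingCoeff ≠ 0 := leadingCoeff_ne_zero.mpr hf0
    have hlg : g.leadingCoeff ≠ 0 := leadingCoeff_ne_zero.mpr hg0
    rcases Nat.lt_or_ge n 2 with h2 | h2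
    · have hn1 : n = 1 := by omega
      have hfd0 : f.natDegree = 0 := by omega
      have hgd0 : g.natDegree = 0 := by omega
      obtain ⟨c, hc⟩ := natDegree_eq_zero.mp hfd0
      obtain ⟨e, he⟩ := natDegree_eq_zero.mp hgd0
      have hcne : c ≠ 0 := by
        intro h0; rw [h0] at hc; simp at hc; exact hf0 hc.symm
      have hz := (hp e (-c) (by
        simp only [ne_eq, Prod.mk.injEq, not_and]
        intro _; simpa using hcne)).1.1
      apply hz
      rw [← hc, ← he, smul_eq_C_mul, smul_eq_C_mul, ← C_mul, ← C_mul, ← C_add,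
        show e * c + -c * e = 0 by ring, C_0]
    · have hpair : ((g.leadingCoeff), -(f.leadingCoeff)) ≠ ((0:ℝ), (0:ℝ)) := by
        simp only [ne_eq, Prod.mk.injEq, not_and]
        intro _; simpa using hlf
      have hmem := hp g.leadingCoeff (-(f.leadingCoeff)) hpair
      set m := g.leadingCoeff • f + (-(f.leadingCoeff)) • g with hm
      have hcf : f.coeff (n - 1) = f.leadingCoeff := by rw [← hfd, coeff_natDegree]
      have hcg : g.coeff (n - 1) = g.leadingCoeff := by rw [← h, coeff_natDegree]
      have hdle : m.natDegree ≤ n - 2 := by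
        rw [natDegree_le_iff_coeff_eq_zero]
        intro N hN
        rw [hm, coeff_add, coeff_smul, coeff_smul, smul_eq_mul, smul_eq_mul]
        rcases eq_or_lt_of_le (show n - 1 ≤ N by omega) with hE | hL
        · rw [← hE, hcf, hcg]; ring
        · rw [coeff_eq_zero_of_natDegree_lt (by omega : f.natDegree < N),
            coeff_eq_zero_of_natDegree_lt (by omega : g.natDegree < N)]
          ring
      have := hmem.2
      omega

/-! ### Same orientation of g and h relative to f -/

lemma st6_same_or {n : ℕ} (hn : 0 < n) {f g h : Polynomial ℝ}
    (hf : MemB n f) (hg : MemB n g) (hh : MemB n h)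
    (hfg : Prec n f g) (hfh : Prec n f h) :
    ∀ x : ℝ, 0 < (st6W f g).eval x * (st6W f h).eval x := by
  have hWg := st6_W_ne_zero hfg.1
  have hWh := st6_W_ne_zero hfh.1
  have hf0 : f ≠ 0 := hf.1.1
  set U := st6W f g * st6W f h with hU
  have hUne : ∀ x, U.eval x ≠ 0 := fun x => by
    rw [hU, eval_mul]; exact mul_ne_zero (hWg x) (hWh x)
  suffices hx0 : ∃ x0, 0 < U.eval x0 by
    obtain ⟨x0, hx0⟩ := hx0
    intro x
    have h1 := st6_const_sign hUne x x0
    have h2 : 0 < U.eval x * 1 := by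
      refine st6_possg h1 ?_
      rw [mul_one]; exact hx0
    rw [mul_one, hU, eval_mul] at h2
    exact h2
  rcases hf.2 with hdeg | hdeg
  · have hne : f.roots.toFinset.Nonempty := by
      rw [← Finset.card_pos, Multiset.toFinset_card_of_nodup hf.1.2.2, hf.1.2.1, hdeg]
      exact hn
    set t := f.roots.toFinset.max' hne with ht
    have htroot : f.IsRoot t :=
      (mem_roots hf0).mp (Multiset.mem_toFinset.mp (f.roots.toFinset.max'_mem hne))
    have htmax : ∀ r, f.IsRoot r → r ≤ t := fun r hr =>
      Finset.le_max' _ r (Multiset.mem_toFinset.mpr ((mem_roots hf0).mpr hr))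
    have hgt : g.eval t < 0 := hfg.2.1 hdeg t htroot htmax
    have hht : h.eval t < 0 := hfh.2.1 hdeg t htroot htmax
    have hfteq : f.eval t = 0 := htroot
    have hWgt : (st6W f g).eval t = (derivative f).eval t * g.eval t := by
      simp [st6W, eval_sub, eval_mul, hfteq]
    have hWht : (st6W f h).eval t = (derivative f).eval t * h.eval t := by
      simp [st6W, eval_sub, eval_mul, hfteq]
    have hft : (derivative f).eval t ≠ 0 := by
      intro h0; apply hWg t; rw [hWgt, h0, zero_mul]
    refine ⟨t, ?_⟩
    rw [hU, eval_mul, hWgt, hWht]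
    nlinarith [mul_pos_of_neg_of_neg hgt hht, mul_self_pos.mpr hft]
  · have hfn : f.natDegree ≠ n := by omega
    have hgd := st6_degg hn hdeg hfn hfg.1 hg
    have hhd := st6_degg hn hdeg hfn hfh.1 hh
    have hg0 : g ≠ 0 := hg.1.1
    have hh0 : h ≠ 0 := hh.1.1
    have hlcg : g.leadingCoeff < 0 := hfg.2.2 hdeg
    have hlch : h.leadingCoeff < 0 := hfh.2.2 hdeg
    have hWg0 : st6W f g ≠ 0 := fun h0 => hWg 0 (by rw [h0]; simp)
    have hWh0 : st6W f h ≠ 0 := fun h0 => hWh 0 (by rw [h0]; simp)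
    have hlcWg := st6_lcW hf0 hg0 hdeg (by omega : g.natDegree = (n - 1) + 1)
    have hlcWh := st6_lcW hf0 hh0 hdeg (by omega : h.natDegree = (n - 1) + 1)
    obtain ⟨x0, hx1, hx2⟩ := ((st6_ev_top hWg0).and (st6_ev_top hWh0)).exists
    refine ⟨x0, ?_⟩
    rw [hU, eval_mul]
    rw [hlcWg] at hx1
    rw [hlcWh] at hx2
    have hlf : f.leadingCoeff ≠ 0 := leadingCoeff_ne_zero.mpr hf0
    have hFGH : 0 < (f.leadingCoeff * f.leadingCoeff) * (g.leadingCoeff * h.leadingCoeff) :=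
      mul_pos (mul_self_pos.mpr hlf) (mul_pos_of_neg_of_neg hlcg hlch)
    nlinarith [mul_pos hx1 hx2, hFGH]

/-! ### Main application lemma -/

lemma st6_app {n : ℕ} (hn : 0 < n) {d : ℝ} (hd : 0 ≤ d) {f g h : Polynomial ℝ}
    (hf : MemB n f) (hg : MemB n g) (hh : MemB n h)
    (hfg : Prec n f g) (hfh : Prec n f h)
    (hsepg : ∀ a b : ℝ, (a, b) ≠ (0, 0) → ENNReal.ofReal d < rootSep (a • f + b • g))
    (hseph : ∀ a b : ℝ, (a, b) ≠ (0, 0) → ENNReal.ofReal d < rootSep (a • f + b • h)) :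
    ∀ a b : ℝ, b ≠ 0 → MemB n (a • f + b • (g + h)) ∧
      ENNReal.ofReal d < rootSep (a • f + b • (g + h)) := by
  intro a b hb
  have hsame := st6_same_or hn hf hg hh hfg hfh
  set P := (a / 2) • f + b • g with hP
  set Q := (a / 2) • f + b • h with hQ
  have hSid : a • f + b • (g + h) = P + Q := by
    rw [hP, hQ]; module
  rw [hSid]
  have hPcomb : ∀ α β : ℝ, α • f + β • P = (α + β * (a / 2)) • f + (β * b) • g := by
    intro α β; rw [hP]; module
  have hQcomb : ∀ α β : ℝ, α • f + β • Q = (α + β * (a / 2)) • f + (β * b) • h := by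
    intro α β; rw [hQ]; module
  have hpair : ∀ α β : ℝ, (α, β) ≠ ((0:ℝ), (0:ℝ)) →
      ((α + β * (a / 2), β * b)) ≠ ((0:ℝ), (0:ℝ)) := by
    intro α β hab hc
    rw [Prod.mk.injEq] at hc
    have hβ : β = 0 := by
      rcases mul_eq_zero.mp hc.2 with h1 | h1
      · exact h1
      · exact absurd h1 hb
    apply hab
    rw [Prod.mk.injEq]
    refine ⟨?_, hβ⟩
    have := hc.1; rw [hβ] at this; simpa using this
  have hPm : ∀ α β : ℝ, (α, β) ≠ (0, 0) → MemB n (α • f + β • P) := fun α β hab => by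
    rw [hPcomb]; exact hfg.1 _ _ (hpair α β hab)
  have hQm : ∀ α β : ℝ, (α, β) ≠ (0, 0) → MemB n (α • f + β • Q) := fun α β hab => by
    rw [hQcomb]; exact hfh.1 _ _ (hpair α β hab)
  have hPsep : ∀ α β : ℝ, (α, β) ≠ (0, 0) →
      ENNReal.ofReal d < rootSep (α • f + β • P) := fun α β hab => by
    rw [hPcomb]; exact hsepg _ _ (hpair α β hab)
  have hQsep : ∀ α β : ℝ, (α, β) ≠ (0, 0) →
      ENNReal.ofReal d < rootSep (α • f + β • Q) := fun α β hab => by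
    rw [hQcomb]; exact hseph _ _ (hpair α β hab)
  have hWPid : st6W f P = b • st6W f g := by
    rw [hP, st6W, st6W, derivative_add, derivative_smul, derivative_smul]
    simp only [smul_eq_C_mul]
    ring
  have hWQid : st6W f Q = b • st6W f h := by
    rw [hQ, st6W, st6W, derivative_add, derivative_smul, derivative_smul]
    simp only [smul_eq_C_mul]
    ring
  have hsign : ∀ x : ℝ, 0 < (st6W f P).eval x * (st6W f Q).eval x := fun x => by
    rw [hWPid, hWQid]
    simp only [eval_smul, smul_eq_mul]
    nlinarith [hsame x, mul_self_pos.mpr hb]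
  have hBcond : f.natDegree = n - 1 → f.natDegree ≠ n →
      P.natDegree = n ∧ Q.natDegree = n ∧ 0 < P.leadingCoeff * Q.leadingCoeff := by
    intro hfd hfn
    have hgd := st6_degg hn hfd hfn hfg.1 hg
    have hhd := st6_degg hn hfd hfn hfh.1 hh
    have hlcg_neg : g.leadingCoeff < 0 := hfg.2.2 hfd
    have hlch_neg : h.leadingCoeff < 0 := hfh.2.2 hfd
    have hcf : f.coeff n = 0 := coeff_eq_zero_of_natDegree_lt (by omega)
    have hcoefP : P.coeff n = b * g.leadingCoeff := by
      rw [hP, coeff_add, coeff_smul, coeff_smul, smul_eq_mul, smul_eq_mul, hcf,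
        show g.coeff n = g.leadingCoeff by rw [← hgd, coeff_natDegree]]
      ring
    have hcoefQ : Q.coeff n = b * h.leadingCoeff := by
      rw [hQ, coeff_add, coeff_smul, coeff_smul, smul_eq_mul, smul_eq_mul, hcf,
        show h.coeff n = h.leadingCoeff by rw [← hhd, coeff_natDegree]]
      ring
    have hPdle : P.natDegree ≤ n := by
      rw [hP]
      refine le_trans (natDegree_add_le _ _) (max_le ?_ ?_)
      · exact le_trans (natDegree_smul_le _ _) (by omega)
      · exact le_trans (natDegree_smul_le _ _) (by omega)
    have hQdle : Q.natDegree ≤ n := by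
      rw [hQ]
      refine le_trans (natDegree_add_le _ _) (max_le ?_ ?_)
      · exact le_trans (natDegree_smul_le _ _) (by omega)
      · exact le_trans (natDegree_smul_le _ _) (by omega)
    have hPd : P.natDegree = n := le_antisymm hPdle (le_natDegree_of_ne_zero
      (by rw [hcoefP]; exact mul_ne_zero hb (ne_of_lt hlcg_neg)))
    have hQd : Q.natDegree = n := le_antisymm hQdle (le_natDegree_of_ne_zero
      (by rw [hcoefQ]; exact mul_ne_zero hb (ne_of_lt hlch_neg)))
    have hlcP : P.leadingCoeff = b * g.leadingCoeff := by rw [leadingCoeff, hPd, hcoefP]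
    have hlcQ : Q.leadingCoeff = b * h.leadingCoeff := by rw [leadingCoeff, hQd, hcoefQ]
    refine ⟨hPd, hQd, ?_⟩
    rw [hlcP, hlcQ]
    nlinarith [mul_pos_of_neg_of_neg hlcg_neg hlch_neg, mul_self_pos.mpr hb]
  exact st6_core hn hd f P Q hf hPm hQm hPsep hQsep hsign hBcond

theorem stmt6 (n : ℕ) (hn : 0 < n) (d : ℝ) (hd : 0 ≤ d) (f g h : Polynomial ℝ)
    (hf : MemB n f) (hg : MemB n g) (hh : MemB n h)
    (hfg : Prec n f g) (hfh : Prec n f h)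
    (hsepg : ∀ a b : ℝ, (a, b) ≠ (0, 0) → ENNReal.ofReal d < rootSep (a • f + b • g))
    (hseph : ∀ a b : ℝ, (a, b) ≠ (0, 0) → ENNReal.ofReal d < rootSep (a • f + b • h)) :
    MemB n (g + h) ∧ Prec n f (g + h) ∧
    ∀ a b : ℝ, (a, b) ≠ (0, 0) → ENNReal.ofReal d < rootSep (a • f + b • (g + h)) := by
  have happ := st6_app hn hd hf hg hh hfg hfh hsepg hseph
  have hgh : MemB n (g + h) := by
    have := (happ 0 1 one_ne_zero).1
    simpa using this
  refine ⟨hgh, ⟨?_, ?_, ?_⟩, ?_⟩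
  · intro a b hab
    by_cases hb : b = 0
    · subst hb
      have h1 := hfg.1 a 0 hab
      simp only [zero_smul, add_zero] at h1 ⊢
      exact h1
    · exact (happ a b hb).1
  · intro hdeg r hr hmax
    have h1 := hfg.2.1 hdeg r hr hmax
    have h2 := hfh.2.1 hdeg r hr hmax
    rw [eval_add]; linarith
  · intro hdeg
    have hfn : f.natDegree ≠ n := by omega
    have hgd := st6_degg hn hdeg hfn hfg.1 hg
    have hhd := st6_degg hn hdeg hfn hfh.1 hh
    have hlcg := hfg.2.2 hdeg
    have hlch := hfh.2.2 hdeg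
    have hcoef : (g + h).coeff n = g.leadingCoeff + h.leadingCoeff := by
      rw [coeff_add, show g.coeff n = g.leadingCoeff by rw [← hgd, coeff_natDegree],
        show h.coeff n = h.leadingCoeff by rw [← hhd, coeff_natDegree]]
    have hdle : (g + h).natDegree ≤ n :=
      le_trans (natDegree_add_le g h) (by omega)
    have hdn : (g + h).natDegree = n :=
      le_antisymm hdle (le_natDegree_of_ne_zero (by rw [hcoef]; intro h0; linarith))
    rw [leadingCoeff, hdn, hcoef]; linarith
  · intro a b hab
    by_cases hb : b = 0
    · subst hb
      have h1 := hsepg a 0 hab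
      simp only [zero_smul, add_zero] at h1 ⊢
      exact h1
    · exact (happ a b hb).2
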